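/- Let C_4 = ⟨(1 2 3 4)⟩ ≤ S_4 act on Z^4 by cyclically permuting coordinates. For a, b ∈ Z, the point p(a,b) = (1+a, b, −a, −b) is a core point for C_4 (i.e. conv(C_4 · p(a,b)) contains no integer points besides its four vertices... or fewer if the orbit is smaller) if and only if gcd(2a+1, 2b) = 1, with the convention gcd(x, 0) = |x|. -/

import Mathlib

noncomputable section

open scoped RealInnerProductSpace

def permAct {n : ℕ} (γ : Equiv.Perm (Fin n)) (x : EuclideanSpace ℝ (Fin n)) :
    EuclideanSpace ℝ (Fin n) := WithLp.toLp 2 (fun i => x (γ⁻¹ i))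

def allOnes (n : ℕ) : EuclideanSpace ℝ (Fin n) := WithLp.toLp 2 (fun _ => 1)

def intVec {n : ℕ} (z : Fin n → ℤ) : EuclideanSpace ℝ (Fin n) := WithLp.toLp 2 (fun i => (z i : ℝ))

def orbitSet {n : ℕ} (Γ : Subgroup (Equiv.Perm (Fin n))) (x : EuclideanSpace ℝ (Fin n)) :
    Set (EuclideanSpace ℝ (Fin n)) := {y | ∃ γ ∈ Γ, y = permAct γ x}

def IsCorePoint {n : ℕ} (Γ : Subgroup (Equiv.Perm (Fin n))) (z : Fin n → ℤ) : Prop :=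
  ∀ y : Fin n → ℤ, intVec y ∈ convexHull ℝ (orbitSet Γ (intVec z)) →
    intVec y ∈ orbitSet Γ (intVec z)

def stabSub {n : ℕ} (Γ : Subgroup (Equiv.Perm (Fin n))) (v : EuclideanSpace ℝ (Fin n)) :
    Subgroup (Equiv.Perm (Fin n)) where
  carrier := {γ | γ ∈ Γ ∧ permAct γ v = v}
  one_mem' := ⟨Γ.one_mem, by ext i; rfl⟩
  mul_mem' := fun {a b} ha hb => ⟨Γ.mul_mem ha.1 hb.1, by
    have h : permAct (a * b) v = permAct a (permAct b v) := rfl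
    rw [h, hb.2, ha.2]⟩
  inv_mem' := fun {a} ha => ⟨Γ.inv_mem ha.1, by
    conv_lhs => rw [← ha.2]
    have h : permAct a⁻¹ (permAct a v) = permAct (a⁻¹ * a) v := rfl
    rw [h, inv_mul_cancel]; ext i; rfl⟩

namespace Stmt18Aux

lemma rinv0 : ((finRotate 4)⁻¹ : Equiv.Perm (Fin 4)) 0 = 3 := by decide
lemma rinv1 : ((finRotate 4)⁻¹ : Equiv.Perm (Fin 4)) 1 = 0 := by decide
lemma rinv2 : ((finRotate 4)⁻¹ : Equiv.Perm (Fin 4)) 2 = 1 := by decide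
lemma rinv3 : ((finRotate 4)⁻¹ : Equiv.Perm (Fin 4)) 3 = 2 := by decide

lemma rot (z : Fin 4 → ℤ) :
    permAct (finRotate 4) (intVec ![z 0, z 1, z 2, z 3]) = intVec ![z 3, z 0, z 1, z 2] := by
  ext i
  fin_cases i <;> simp [permAct, intVec, rinv0, rinv1, rinv2, rinv3]

variable (a b : ℤ)

def P0 : EuclideanSpace ℝ (Fin 4) := intVec ![1+a, b, -a, -b]
def P1 : EuclideanSpace ℝ (Fin 4) := intVec ![-b, 1+a, b, -a]
def P2 : EuclideanSpace ℝ (Fin 4) := intVec ![-a, -b, 1+a, b]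
def P3 : EuclideanSpace ℝ (Fin 4) := intVec ![b, -a, -b, 1+a]

lemma rot0 : permAct (finRotate 4) (P0 a b) = P1 a b := by
  have := rot ![1+a, b, -a, -b]; simpa [P0, P1] using this
lemma rot1 : permAct (finRotate 4) (P1 a b) = P2 a b := by
  have := rot ![-b, 1+a, b, -a]; simpa [P1, P2] using this
lemma rot2 : permAct (finRotate 4) (P2 a b) = P3 a b := by
  have := rot ![-a, -b, 1+a, b]; simpa [P2, P3] using this
lemma rot3 : permAct (finRotate 4) (P3 a b) = P0 a b := by
  have := rot ![b, -a, -b, 1+a]; simpa [P3, P0] using this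

lemma permAct_mul {n : ℕ} (γ δ : Equiv.Perm (Fin n)) (x : EuclideanSpace ℝ (Fin n)) :
    permAct (γ * δ) x = permAct γ (permAct δ x) := rfl

lemma permAct_one {n : ℕ} (x : EuclideanSpace ℝ (Fin n)) : permAct 1 x = x := by ext i; rfl

lemma permAct_inv_cancel {n : ℕ} (γ : Equiv.Perm (Fin n)) (x : EuclideanSpace ℝ (Fin n)) :
    permAct γ⁻¹ (permAct γ x) = x := by
  rw [← permAct_mul, inv_mul_cancel, permAct_one]

def Pset : Set (EuclideanSpace ℝ (Fin 4)) := {P0 a b, P1 a b, P2 a b, P3 a b}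

lemma orbit_eq : orbitSet (Subgroup.zpowers (finRotate 4)) (P0 a b) = Pset a b := by
  have step : ∀ q ∈ Pset a b, permAct (finRotate 4) q ∈ Pset a b := by
    rintro q (rfl | rfl | rfl | rfl)
    · rw [rot0]; right; left; rfl
    · rw [rot1]; right; right; left; rfl
    · rw [rot2]; right; right; right; rfl
    · rw [rot3]; left; rfl
  have stepinv : ∀ q ∈ Pset a b, permAct (finRotate 4)⁻¹ q ∈ Pset a b := by
    rintro q (rfl | rfl | rfl | rfl)
    · rw [← rot3 a b, permAct_inv_cancel]; right; right; right; rfl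
    · rw [← rot0 a b, permAct_inv_cancel]; left; rfl
    · rw [← rot1 a b, permAct_inv_cancel]; right; left; rfl
    · rw [← rot2 a b, permAct_inv_cancel]; right; right; left; rfl
  ext y
  constructor
  · rintro ⟨γ, hγ, rfl⟩
    obtain ⟨k, rfl⟩ := Subgroup.mem_zpowers_iff.mp hγ
    induction k using Int.induction_on with
    | zero => rw [zpow_zero, permAct_one]; left; rfl
    | succ k ih =>
        have : (finRotate 4 : Equiv.Perm (Fin 4)) ^ ((k : ℤ) + 1)
            = finRotate 4 * (finRotate 4) ^ (k : ℤ) := by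
          rw [add_comm, zpow_one_add]
        rw [this, permAct_mul]
        exact step _ (ih (Subgroup.zpow_mem _ (Subgroup.mem_zpowers _) _))
    | pred k ih =>
        have : (finRotate 4 : Equiv.Perm (Fin 4)) ^ (-(k : ℤ) - 1)
            = (finRotate 4)⁻¹ * (finRotate 4) ^ (-(k : ℤ)) := by
          rw [sub_eq_add_neg, add_comm, zpow_add, zpow_neg_one]
        rw [this, permAct_mul]
        exact stepinv _ (ih (Subgroup.zpow_mem _ (Subgroup.mem_zpowers _) _))
  · rintro (rfl | rfl | rfl | rfl)
    · exact ⟨1, one_mem _, (permAct_one _).symm⟩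
    · exact ⟨finRotate 4, Subgroup.mem_zpowers _, (rot0 a b).symm⟩
    · refine ⟨finRotate 4 * finRotate 4,
        mul_mem (Subgroup.mem_zpowers _) (Subgroup.mem_zpowers _), ?_⟩
      rw [permAct_mul, rot0, rot1]
    · refine ⟨finRotate 4 * (finRotate 4 * finRotate 4),
        mul_mem (Subgroup.mem_zpowers _)
          (mul_mem (Subgroup.mem_zpowers _) (Subgroup.mem_zpowers _)), ?_⟩
      rw [permAct_mul, permAct_mul, rot0, rot1, rot2]

lemma twoa1_ne : (2*a + 1 : ℤ) ≠ 0 := by omega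

lemma ne01 : P0 a b ≠ P1 a b := by
  intro h
  have h0 := congrArg (· 0) h
  have h2 := congrArg (· 2) h
  simp only [P0, P1, intVec, PiLp.toLp_apply, Matrix.cons_val_zero, Matrix.cons_val_one, Matrix.head_cons, Matrix.cons_val_two, Matrix.tail_cons, Matrix.cons_val_three] at h0 h2
  have e0 : (1 + a : ℤ) = -b := by exact_mod_cast h0
  have e2 : (-a : ℤ) = b := by exact_mod_cast h2
  omega

lemma ne02 : P0 a b ≠ P2 a b := by
  intro h
  have h0 := congrArg (· 0) h
  simp only [P0, P2, intVec, PiLp.toLp_apply, Matrix.cons_val_zero, Matrix.cons_val_one, Matrix.head_cons, Matrix.cons_val_two, Matrix.tail_cons, Matrix.cons_val_three] at h0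
  have e0 : (1 + a : ℤ) = -a := by exact_mod_cast h0
  omega

lemma ne03 : P0 a b ≠ P3 a b := by
  intro h
  have h0 := congrArg (· 0) h
  have h2 := congrArg (· 2) h
  simp only [P0, P3, intVec, PiLp.toLp_apply, Matrix.cons_val_zero, Matrix.cons_val_one, Matrix.head_cons, Matrix.cons_val_two, Matrix.tail_cons, Matrix.cons_val_three] at h0 h2
  have e0 : (1 + a : ℤ) = b := by exact_mod_cast h0
  have e2 : (-a : ℤ) = -b := by exact_mod_cast h2
  omega

lemma ne12 : P1 a b ≠ P2 a b := by
  intro h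
  have h1 := congrArg (· 1) h
  have h3 := congrArg (· 3) h
  simp only [P1, P2, intVec, PiLp.toLp_apply, Matrix.cons_val_zero, Matrix.cons_val_one, Matrix.head_cons, Matrix.cons_val_two, Matrix.tail_cons, Matrix.cons_val_three] at h1 h3
  have e1 : (1 + a : ℤ) = -b := by exact_mod_cast h1
  have e3 : (-a : ℤ) = b := by exact_mod_cast h3
  omega

lemma ne13 : P1 a b ≠ P3 a b := by
  intro h
  have h1 := congrArg (· 1) h
  simp only [P1, P3, intVec, PiLp.toLp_apply, Matrix.cons_val_zero, Matrix.cons_val_one, Matrix.head_cons, Matrix.cons_val_two, Matrix.tail_cons, Matrix.cons_val_three] at h1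
  have e1 : (1 + a : ℤ) = -a := by exact_mod_cast h1
  omega

lemma ne23 : P2 a b ≠ P3 a b := by
  intro h
  have h0 := congrArg (· 0) h
  have h2 := congrArg (· 2) h
  simp only [P2, P3, intVec, PiLp.toLp_apply, Matrix.cons_val_zero, Matrix.cons_val_one, Matrix.head_cons, Matrix.cons_val_two, Matrix.tail_cons, Matrix.cons_val_three] at h0 h2
  have e0 : (-a : ℤ) = b := by exact_mod_cast h0
  have e2 : (1 + a : ℤ) = -b := by exact_mod_cast h2
  omega

end Stmt18Aux

open Stmt18Aux in
theorem stmt18 (a b : ℤ) :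
    IsCorePoint (Subgroup.zpowers (finRotate 4)) ![1 + a, b, -a, -b] ↔
      Int.gcd (2 * a + 1) (2 * b) = 1 := by
  classical
  have hP0 : intVec ![1 + a, b, -a, -b] = P0 a b := rfl
  constructor
  · -- core point → gcd = 1
    intro hcore
    by_contra hg
    set g : ℤ := (Int.gcd (2*a+1) (2*b) : ℤ) with hgdef
    have hg0 : g ≠ 0 := by
      simp only [hgdef, ne_eq, Int.natCast_eq_zero, Int.gcd_eq_zero_iff, not_and]
      intro h; exact absurd h (twoa1_ne a)
    have hg1 : g ≠ 1 := by
      rw [hgdef]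
      intro h
      exact hg (by exact_mod_cast h)
    have hgpos : (2:ℤ) ≤ g := by
      have : 0 ≤ g := Int.natCast_nonneg _
      omega
    have hdvd1 : g ∣ 2*a+1 := Int.gcd_dvd_left _ _
    have hdvd2 : g ∣ 2*b := Int.gcd_dvd_right _ _
    obtain ⟨c, hc⟩ := hdvd1
    obtain ⟨d, hd⟩ := hdvd2
    have hcne : c ≠ 0 := by
      intro h; rw [h, mul_zero] at hc; exact twoa1_ne a hc
    set y : Fin 4 → ℤ := ![1+a-c, b-d, -a+c, -b+d] with hydef
    have hG0 : (g:ℝ) ≠ 0 := Int.cast_ne_zero.mpr hg0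
    have hGpos : (0:ℝ) < g := by exact_mod_cast lt_of_lt_of_le zero_lt_two hgpos
    have hG1 : (1:ℝ) ≤ (g:ℝ) := by exact_mod_cast (by omega : (1:ℤ) ≤ g)
    have hmem : intVec y ∈ convexHull ℝ (orbitSet (Subgroup.zpowers (finRotate 4)) (P0 a b)) := by
      rw [orbit_eq]
      have hseg : intVec y ∈ segment ℝ (P0 a b) (P2 a b) := by
        refine ⟨1 - 1/(g:ℝ), 1/(g:ℝ), by
          rw [sub_nonneg]
          rw [div_le_one hGpos]
          linarith [hG1], by positivity, by ring, ?_⟩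
        ext i
        have hcR : (g:ℝ) * (c:ℝ) = 2*(a:ℝ)+1 := by exact_mod_cast hc.symm
        have hdR : (g:ℝ) * (d:ℝ) = 2*(b:ℝ) := by exact_mod_cast hd.symm
        fin_cases i <;>
          simp only [PiLp.add_apply, PiLp.smul_apply, smul_eq_mul, P0, P2, intVec, PiLp.toLp_apply, hydef,
            Matrix.cons_val_zero, Matrix.cons_val_one, Matrix.head_cons, Matrix.cons_val_two, Matrix.tail_cons, Matrix.cons_val_three] <;>
          push_cast <;> field_simp <;>
          first
            | linear_combination hcR
            | linear_combination hdR
            | linear_combination (1-(g:ℝ))*hcR - hdR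
            | linear_combination hcR - (1+(g:ℝ))*hdR
            | linear_combination hcR - hdR
            | linear_combination (1-(g:ℝ))*hdR - hcR
            | linear_combination hdR - (1+(g:ℝ))*hcR
            | linear_combination (g:ℝ)*hcR
            | linear_combination (g:ℝ)*hdR
            | linear_combination -(g:ℝ)*hcR
            | linear_combination -(g:ℝ)*hdR
            | linear_combination -hcR
            | linear_combination -hdR
            | ring
      have hsub : segment ℝ (P0 a b) (P2 a b) ⊆ convexHull ℝ (Pset a b) := by
        apply (convex_convexHull ℝ (Pset a b)).segment_subset
        · exact subset_convexHull ℝ _ (by left; rfl)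
        · exact subset_convexHull ℝ _ (by right; right; left; rfl)
      exact hsub hseg
    have horal := hcore y (by rw [hP0]; exact hmem)
    rw [hP0] at horal
    rw [orbit_eq] at horal
    rcases horal with h | h | h | h
    · -- y = P0 : c = 0 contradiction
      have h0 := congrArg (· 0) h
      simp only [hydef, P0, intVec, PiLp.toLp_apply, Matrix.cons_val_zero, Matrix.cons_val_one, Matrix.head_cons, Matrix.cons_val_two, Matrix.tail_cons, Matrix.cons_val_three] at h0
      have : (1 + a - c : ℤ) = 1 + a := by exact_mod_cast h0
      omega
    · -- y = P1 : 1 = 0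
      have h0 := congrArg (· 0) h
      have h2 := congrArg (· 2) h
      simp only [hydef, P1, intVec, PiLp.toLp_apply, Matrix.cons_val_zero, Matrix.cons_val_one, Matrix.head_cons, Matrix.cons_val_two, Matrix.tail_cons, Matrix.cons_val_three] at h0 h2
      have e0 : (1 + a - c : ℤ) = -b := by exact_mod_cast h0
      have e2 : (-a + c : ℤ) = b := by exact_mod_cast h2
      omega
    · -- y = P2 : g = 1 contradiction
      have h0 := congrArg (· 0) h
      simp only [hydef, P2, intVec, PiLp.toLp_apply, Matrix.cons_val_zero, Matrix.cons_val_one, Matrix.head_cons, Matrix.cons_val_two, Matrix.tail_cons, Matrix.cons_val_three] at h0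
      have e0 : (1 + a - c : ℤ) = -a := by exact_mod_cast h0
      have hc2 : c = 2*a+1 := by omega
      rw [hc2] at hc
      have : (2*a+1) * (g - 1) = 0 := by linarith [hc]
      rcases mul_eq_zero.mp this with h' | h'
      · exact twoa1_ne a h'
      · omega
    · -- y = P3 : 1 = 0
      have h0 := congrArg (· 0) (Set.mem_singleton_iff.mp h)
      have h2 := congrArg (· 2) (Set.mem_singleton_iff.mp h)
      simp only [hydef, P3, intVec, PiLp.toLp_apply, Matrix.cons_val_zero, Matrix.cons_val_one, Matrix.head_cons, Matrix.cons_val_two, Matrix.tail_cons, Matrix.cons_val_three] at h0 h2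
      have e0 : (1 + a - c : ℤ) = b := by exact_mod_cast h0
      have e2 : (-a + c : ℤ) = -b := by exact_mod_cast h2
      omega
  · -- gcd = 1 → core point
    intro hg y hy
    rw [hP0] at hy ⊢
    rw [orbit_eq] at hy ⊢
    obtain ⟨u, v, huv⟩ := Int.isCoprime_iff_gcd_eq_one.mpr hg
    have huvR : (u:ℝ) * (2*(a:ℝ)+1) + (v:ℝ) * (2*(b:ℝ)) = 1 := by exact_mod_cast huv
    -- convert the set to a Finset
    have hPsetF : Pset a b =
        (({P0 a b, P1 a b, P2 a b, P3 a b} : Finset (EuclideanSpace ℝ (Fin 4))) :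
          Set (EuclideanSpace ℝ (Fin 4))) := by
      simp [Pset]
    rw [hPsetF] at hy
    rw [Finset.mem_convexHull'] at hy
    obtain ⟨w, hwnn, hwsum, hwcomb⟩ := hy
    have hm1 : P0 a b ∉ ({P1 a b, P2 a b, P3 a b} : Finset (EuclideanSpace ℝ (Fin 4))) := by
      simp [ne01 a b, ne02 a b, ne03 a b]
    have hm2 : P1 a b ∉ ({P2 a b, P3 a b} : Finset (EuclideanSpace ℝ (Fin 4))) := by
      simp [ne12 a b, ne13 a b]
    have hm3 : P2 a b ∉ ({P3 a b} : Finset (EuclideanSpace ℝ (Fin 4))) := by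
      simp [ne23 a b]
    rw [Finset.sum_insert hm1, Finset.sum_insert hm2, Finset.sum_insert hm3,
      Finset.sum_singleton] at hwsum hwcomb
    set w0 := w (P0 a b) with hw0def
    set w1 := w (P1 a b) with hw1def
    set w2 := w (P2 a b) with hw2def
    set w3 := w (P3 a b) with hw3def
    have hn0 : 0 ≤ w0 := hwnn _ (by simp)
    have hn1 : 0 ≤ w1 := hwnn _ (by simp)
    have hn2 : 0 ≤ w2 := hwnn _ (by simp)
    have hn3 : 0 ≤ w3 := hwnn _ (by simp)
    have e0 := congrArg (· 0) hwcomb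
    have e1 := congrArg (· 1) hwcomb
    have e2 := congrArg (· 2) hwcomb
    have e3 := congrArg (· 3) hwcomb
    simp only [PiLp.add_apply, PiLp.smul_apply, smul_eq_mul, P0, P1, P2, P3, intVec, PiLp.toLp_apply] at e0 e1 e2 e3
    simp only [Matrix.cons_val_zero, Matrix.cons_val_one, Matrix.head_cons,
      Matrix.cons_val_two, Matrix.cons_val_three, Matrix.tail_cons, Matrix.head_fin_const] at e0 e1 e2 e3
    push_cast at e0 e1 e2 e3
    -- the two "level" integers
    have hs : w0 + w2 = ((y 0 + y 2 : ℤ) : ℝ) := by push_cast; linear_combination e0 + e2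
    have ht : w1 + w3 = ((y 1 + y 3 : ℤ) : ℝ) := by push_cast; linear_combination e1 + e3
    have hst : (y 0 + y 2 : ℤ) + (y 1 + y 3) = 1 := by
      have : (((y 0 + y 2 : ℤ) + (y 1 + y 3) : ℤ) : ℝ) = 1 := by
        push_cast
        linear_combination hwsum - e0 - e1 - e2 - e3
      exact_mod_cast this
    have hs0 : (0:ℤ) ≤ y 0 + y 2 := by
      have : (0:ℝ) ≤ ((y 0 + y 2 : ℤ) : ℝ) := by rw [← hs]; linarith
      exact_mod_cast this
    have ht0 : (0:ℤ) ≤ y 1 + y 3 := by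
      have : (0:ℝ) ≤ ((y 1 + y 3 : ℤ) : ℝ) := by rw [← ht]; linarith
      exact_mod_cast this
    have hcase : (y 0 + y 2 = 1 ∧ y 1 + y 3 = 0) ∨ (y 0 + y 2 = 0 ∧ y 1 + y 3 = 1) := by omega
    rcases hcase with ⟨hA, hB⟩ | ⟨hA, hB⟩
    · -- mass on P0, P2
      have hz13 : w1 = 0 ∧ w3 = 0 := by
        rw [hB] at ht
        push_cast at ht
        constructor <;> linarith
      obtain ⟨hz1, hz3⟩ := hz13
      have f0 : w0 * (2*(a:ℝ)+1) = (y 0 : ℝ) + a := by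
        linear_combination e0 + (a:ℝ)*hwsum + ((b:ℝ)-(a:ℝ))*hz1 + (-(b:ℝ)-(a:ℝ))*hz3
      have f1 : w0 * (2*(b:ℝ)) = (y 1 : ℝ) + b := by
        linear_combination e1 + (b:ℝ)*hwsum - (1+(a:ℝ)+(b:ℝ))*hz1 + ((a:ℝ)-(b:ℝ))*hz3
      set k : ℤ := u*(y 0 + a) + v*(y 1 + b) with hkdef
      have hk : (k:ℝ) = w0 := by
        rw [hkdef]
        push_cast
        linear_combination w0*huvR - (u:ℝ)*f0 - (v:ℝ)*f1
      have hw0le : w0 ≤ 1 := by linarith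
      have hk01 : k = 0 ∨ k = 1 := by
        have h1 : (0:ℝ) ≤ (k:ℝ) := by rw [hk]; exact hn0
        have h2 : (k:ℝ) ≤ 1 := by rw [hk]; exact hw0le
        have h1' : (0:ℤ) ≤ k := by exact_mod_cast h1
        have h2' : k ≤ 1 := by exact_mod_cast h2
        omega
      rcases hk01 with hk0 | hk1
      · -- w0 = 0, y = P2
        have hw0 : w0 = 0 := by rw [← hk, hk0]; simp
        have hw2' : w2 = 1 := by linarith
        have : intVec y = P2 a b := by
          rw [← hwcomb, hw0, hz1, hz3, hw2']
          simp
        rw [this]; right; right; left; rfl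
      · -- w0 = 1, y = P0
        have hw0 : w0 = 1 := by rw [← hk, hk1]; simp
        have hw2' : w2 = 0 := by linarith
        have : intVec y = P0 a b := by
          rw [← hwcomb, hw0, hz1, hz3, hw2']
          simp
        rw [this]; left; rfl
    · -- mass on P1, P3
      have hz02 : w0 = 0 ∧ w2 = 0 := by
        rw [hA] at hs
        push_cast at hs
        constructor <;> linarith
      obtain ⟨hz0, hz2⟩ := hz02
      have f0 : w1 * (2*(a:ℝ)+1) = (y 1 : ℝ) + a := by
        linear_combination e1 + (a:ℝ)*hwsum + (-(b:ℝ)-(a:ℝ))*hz0 + ((b:ℝ)-(a:ℝ))*hz2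
      have f1 : w1 * (2*(b:ℝ)) = (y 2 : ℝ) + b := by
        linear_combination e2 + (b:ℝ)*hwsum + ((a:ℝ)-(b:ℝ))*hz0 - (1+(a:ℝ)+(b:ℝ))*hz2
      set k : ℤ := u*(y 1 + a) + v*(y 2 + b) with hkdef
      have hk : (k:ℝ) = w1 := by
        rw [hkdef]
        push_cast
        linear_combination w1*huvR - (u:ℝ)*f0 - (v:ℝ)*f1
      have hw1le : w1 ≤ 1 := by linarith
      have hk01 : k = 0 ∨ k = 1 := by
        have h1 : (0:ℝ) ≤ (k:ℝ) := by rw [hk]; exact hn1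
        have h2 : (k:ℝ) ≤ 1 := by rw [hk]; exact hw1le
        have h1' : (0:ℤ) ≤ k := by exact_mod_cast h1
        have h2' : k ≤ 1 := by exact_mod_cast h2
        omega
      rcases hk01 with hk0 | hk1
      · -- w1 = 0, y = P3
        have hw1' : w1 = 0 := by rw [← hk, hk0]; simp
        have hw3' : w3 = 1 := by linarith
        have : intVec y = P3 a b := by
          rw [← hwcomb, hz0, hw1', hz2, hw3']
          simp
        rw [this]; right; right; right; rfl
      · -- w1 = 1, y = P1
        have hw1' : w1 = 1 := by rw [← hk, hk1]; simp
        have hw3' : w3 = 0 := by linarith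
        have : intVec y = P1 a b := by
          rw [← hwcomb, hz0, hw1', hz2, hw3']
          simp
        rw [this]; right; left; rfl
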